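/- Let 0 ≤ d ≤ n and 0 ≤ s ≤ min(d, n−d) be integers, and let Y_{n,d} ⊆ ℝ^n be the set of 0,1-vectors with exactly d coordinates equal to 1. If A ⊆ Y_{n,d} is an s-distance set, then |A| ≤ C(n, s). -/

import Mathlib

noncomputable section

/-- The set of nonzero distances determined by a set `A` in Euclidean space. -/
def distSet {n : ℕ} (A : Set (EuclideanSpace ℝ (Fin n))) : Set ℝ :=
  {d | ∃ p ∈ A, ∃ q ∈ A, p ≠ q ∧ dist p q = d}

namespace RCW

open Finset

variable {n d s : ℕ}

/-- Inner product of two vectors. -/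
def ip {n : ℕ} (a x : EuclideanSpace ℝ (Fin n)) : ℝ := ∑ i, a i * x i

/-- Monomial function on the subtype of a finset. -/
def M (A : Finset (EuclideanSpace ℝ (Fin n))) (I : Finset (Fin n)) : ↥A → ℝ :=
  fun x => ∏ i ∈ I, (x : EuclideanSpace ℝ (Fin n)) i

/-- Span of monomials of degree at most `k`. -/
def U (A : Finset (EuclideanSpace ℝ (Fin n))) (k : ℕ) : Submodule ℝ (↥A → ℝ) :=
  Submodule.span ℝ (M A '' {I | I.card ≤ k})

/-- Span of monomials of degree exactly `s`. -/
def V (A : Finset (EuclideanSpace ℝ (Fin n))) (s : ℕ) : Submodule ℝ (↥A → ℝ) :=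
  Submodule.span ℝ (((Finset.powersetCard s Finset.univ).image (M A)) : Set (↥A → ℝ))

lemma U_mono (A : Finset (EuclideanSpace ℝ (Fin n))) {k l : ℕ} (h : k ≤ l) :
    U A k ≤ U A l :=
  Submodule.span_mono (Set.image_mono (fun I hI => le_trans hI h))

lemma sum_coords {p : EuclideanSpace ℝ (Fin n)} (hp : ∀ i, p i = 0 ∨ p i = 1)
    (hc : {i | p i = 1}.ncard = d) : ∑ i, p i = (d : ℝ) := by
  classical
  set F := {i | p i = 1}.toFinset with hF
  have hFcard : F.card = d := by
    rw [hF, ← Set.ncard_eq_toFinset_card']; exact hc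
  have h1 : ∑ i ∈ F, p i = ∑ i, p i := by
    apply Finset.sum_subset (Finset.subset_univ F)
    intro i _ hiF
    rcases hp i with h | h
    · exact h
    · exact absurd (by simpa [hF] using h) hiF
  have h2 : ∑ i ∈ F, p i = (F.card : ℝ) := by
    have hall : ∀ i ∈ F, p i = 1 := fun i hi => by simpa [hF] using hi
    rw [Finset.sum_congr rfl hall, Finset.sum_const, nsmul_eq_mul, mul_one]
  rw [← h1, h2, hFcard]

lemma coord_mul_M (A : Finset (EuclideanSpace ℝ (Fin n)))
    (h01 : ∀ x ∈ A, ∀ i, x i = 0 ∨ x i = 1)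
    (i : Fin n) (I : Finset (Fin n)) (x : ↥A) :
    (x : EuclideanSpace ℝ (Fin n)) i * M A I x = M A (insert i I) x := by
  classical
  by_cases hi : i ∈ I
  · rw [Finset.insert_eq_self.2 hi]
    unfold M
    rw [← Finset.mul_prod_erase I _ hi, ← mul_assoc]
    congr 1
    rcases h01 x x.2 i with h | h <;> rw [h] <;> ring
  · unfold M; rw [Finset.prod_insert hi]

lemma coordMul_mem_U (A : Finset (EuclideanSpace ℝ (Fin n)))
    (h01 : ∀ x ∈ A, ∀ i, x i = 0 ∨ x i = 1)
    (i : Fin n) (k : ℕ) {u : ↥A → ℝ} (hu : u ∈ U A k) :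
    (fun x : ↥A => (x : EuclideanSpace ℝ (Fin n)) i * u x) ∈ U A (k + 1) := by
  induction hu using Submodule.span_induction with
  | mem u hu =>
    obtain ⟨I, hI, rfl⟩ := hu
    have : (fun x : ↥A => (x : EuclideanSpace ℝ (Fin n)) i * M A I x) = M A (insert i I) := by
      funext x; exact coord_mul_M A h01 i I x
    rw [this]
    exact Submodule.subset_span ⟨insert i I, le_trans (Finset.card_insert_le i I)
      (Nat.add_le_add_right hI 1), rfl⟩
  | zero =>
    have : (fun x : ↥A => (x : EuclideanSpace ℝ (Fin n)) i * (0 : ↥A → ℝ) x) = 0 := by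
      funext x; simp
    rw [this]; exact (U A (k + 1)).zero_mem
  | add u v hu hv hu' hv' =>
    have : (fun x : ↥A => (x : EuclideanSpace ℝ (Fin n)) i * (u + v) x)
        = (fun x : ↥A => (x : EuclideanSpace ℝ (Fin n)) i * u x)
          + (fun x : ↥A => (x : EuclideanSpace ℝ (Fin n)) i * v x) := by
      funext x; simp [mul_add]
    rw [this]; exact (U A (k + 1)).add_mem hu' hv'
  | smul c u hu hu' =>
    have : (fun x : ↥A => (x : EuclideanSpace ℝ (Fin n)) i * (c • u) x)
        = c • fun x : ↥A => (x : EuclideanSpace ℝ (Fin n)) i * u x := by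
      funext x; simp [mul_comm, mul_assoc, mul_left_comm]
    rw [this]; exact (U A (k + 1)).smul_mem c hu'

lemma ipMul_mem_U (A : Finset (EuclideanSpace ℝ (Fin n)))
    (h01 : ∀ x ∈ A, ∀ i, x i = 0 ∨ x i = 1)
    (a : EuclideanSpace ℝ (Fin n)) (k : ℕ) {u : ↥A → ℝ} (hu : u ∈ U A k) :
    (fun x : ↥A => ip a ↑x * u x) ∈ U A (k + 1) := by
  have : (fun x : ↥A => ip a ↑x * u x)
      = ∑ i : Fin n, a i • fun x : ↥A => (x : EuclideanSpace ℝ (Fin n)) i * u x := by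
    funext x
    simp only [Finset.sum_apply, Pi.smul_apply, smul_eq_mul, ip, Finset.sum_mul]
    exact Finset.sum_congr rfl fun i _ => by ring
  rw [this]
  exact Submodule.sum_mem _ fun i _ =>
    (U A (k + 1)).smul_mem _ (coordMul_mem_U A h01 i k hu)

lemma prod_mem_U (A : Finset (EuclideanSpace ℝ (Fin n)))
    (h01 : ∀ x ∈ A, ∀ i, x i = 0 ∨ x i = 1)
    (a : EuclideanSpace ℝ (Fin n)) (L : Finset ℝ) :
    (fun x : ↥A => ∏ μ ∈ L, (ip a ↑x - μ)) ∈ U A L.card := by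
  classical
  induction L using Finset.induction with
  | empty =>
    have : (fun x : ↥A => ∏ μ ∈ (∅ : Finset ℝ), (ip a ↑x - μ)) = M A ∅ := by
      funext x; simp [M]
    rw [this]
    exact Submodule.subset_span ⟨∅, by simp, rfl⟩
  | @insert μ L hμ ih =>
    have key : (fun x : ↥A => ∏ ν ∈ insert μ L, (ip a ↑x - ν))
        = (fun x : ↥A => ip a ↑x * ∏ ν ∈ L, (ip a ↑x - ν))
          - μ • fun x : ↥A => ∏ ν ∈ L, (ip a ↑x - ν) := by
      funext x
      simp only [Finset.prod_insert hμ, Pi.sub_apply, Pi.smul_apply, smul_eq_mul]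
      ring
    rw [key, Finset.card_insert_of_notMem hμ]
    exact Submodule.sub_mem _ (ipMul_mem_U A h01 a L.card ih)
      ((U A (L.card + 1)).smul_mem μ (U_mono A (Nat.le_succ _) ih))

lemma M_mem_V (A : Finset (EuclideanSpace ℝ (Fin n)))
    (h01 : ∀ x ∈ A, ∀ i, x i = 0 ∨ x i = 1)
    (hsum : ∀ x ∈ A, ∑ i, x i = (d : ℝ))
    (hsd : s ≤ d) :
    ∀ m : ℕ, ∀ I : Finset (Fin n), I.card ≤ s → s - I.card ≤ m → M A I ∈ V A s := by
  classical
  intro m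
  induction m with
  | zero =>
    intro I h1 h2
    have : I.card = s := le_antisymm h1 (Nat.sub_eq_zero_iff_le.1 (Nat.le_zero.1 h2))
    exact Submodule.subset_span (Finset.mem_coe.2 (Finset.mem_image.2
      ⟨I, Finset.mem_powersetCard_univ.2 this, rfl⟩))
  | succ m ih =>
    intro I h1 h2
    rcases eq_or_lt_of_le h1 with he | hlt
    · exact Submodule.subset_span (Finset.mem_coe.2 (Finset.mem_image.2
        ⟨I, Finset.mem_powersetCard_univ.2 he, rfl⟩))
    · have hkd : I.card < d := lt_of_lt_of_le hlt hsd
      have hne : ((d : ℝ) - I.card) ≠ 0 := by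
        have : (I.card : ℝ) < d := by exact_mod_cast hkd
        linarith
      have key : M A I = ((d : ℝ) - I.card)⁻¹ • ∑ j ∈ Iᶜ, M A (insert j I) := by
        funext x
        have hx : ∑ i, (x : EuclideanSpace ℝ (Fin n)) i = (d : ℝ) := hsum _ x.2
        have e1 : ∑ j ∈ Iᶜ, M A (insert j I) x
            = (∑ j ∈ Iᶜ, (x : EuclideanSpace ℝ (Fin n)) j) * M A I x := by
          rw [Finset.sum_mul]
          exact Finset.sum_congr rfl fun j _ => (coord_mul_M A h01 j I x).symm
        have e2 : ∑ j ∈ I, (x : EuclideanSpace ℝ (Fin n)) j * M A I x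
            = (I.card : ℝ) * M A I x := by
          rw [Finset.sum_congr rfl fun j hj => by
            rw [coord_mul_M A h01 j I x, Finset.insert_eq_self.2 hj]]
          simp [mul_comm]
        have e3 : (∑ j ∈ Iᶜ, (x : EuclideanSpace ℝ (Fin n)) j)
            = (d : ℝ) - ∑ j ∈ I, (x : EuclideanSpace ℝ (Fin n)) j := by
          rw [← hx, ← Finset.sum_add_sum_compl I (fun j => (x : EuclideanSpace ℝ (Fin n)) j)]
          ring
        have e4 : (∑ j ∈ I, (x : EuclideanSpace ℝ (Fin n)) j) * M A I x
            = (I.card : ℝ) * M A I x := by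
          rw [← e2, Finset.sum_mul]
        have : ∑ j ∈ Iᶜ, M A (insert j I) x = ((d : ℝ) - I.card) * M A I x := by
          rw [e1, e3, sub_mul, e4]; ring
        simp only [Pi.smul_apply, Finset.sum_apply, smul_eq_mul]
        rw [this, ← mul_assoc, inv_mul_cancel₀ hne, one_mul]
      rw [key]
      refine Submodule.smul_mem _ _ (Submodule.sum_mem _ fun j hj => ?_)
      have hjI : j ∉ I := Finset.mem_compl.1 hj
      have hc : (insert j I).card = I.card + 1 := Finset.card_insert_of_notMem hjI
      apply ih
      · rw [hc]; exact hlt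
      · rw [hc]; omega

lemma ip_self {p : EuclideanSpace ℝ (Fin n)} (hp : ∀ i, p i = 0 ∨ p i = 1)
    (hpd : ∑ i, p i = (d : ℝ)) : ip p p = (d : ℝ) := by
  unfold ip
  rw [← hpd]
  exact Finset.sum_congr rfl fun i _ => by rcases hp i with h | h <;> rw [h] <;> ring

lemma ip_dist {p q : EuclideanSpace ℝ (Fin n)}
    (hp : ∀ i, p i = 0 ∨ p i = 1) (hq : ∀ i, q i = 0 ∨ q i = 1)
    (hpd : ∑ i, p i = (d : ℝ)) (hqd : ∑ i, q i = (d : ℝ)) :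
    ip p q = (d : ℝ) - dist p q ^ 2 / 2 := by
  have h1 : dist p q ^ 2 = ∑ i, (p i - q i) ^ 2 := by
    rw [EuclideanSpace.dist_eq, Real.sq_sqrt (Finset.sum_nonneg fun i _ => sq_nonneg _)]
    exact Finset.sum_congr rfl fun i _ => by rw [Real.dist_eq, sq_abs]
  have h2 : ∀ i, (p i - q i) ^ 2 = p i + q i - 2 * (p i * q i) := fun i => by
    rcases hp i with h | h <;> rcases hq i with h' | h' <;> rw [h, h'] <;> ring
  have h3 : ∑ i, (p i - q i) ^ 2 = (d : ℝ) + d - 2 * ip p q := by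
    rw [Finset.sum_congr rfl fun i _ => h2 i]
    rw [Finset.sum_sub_distrib, Finset.sum_add_distrib, ← Finset.mul_sum, hpd, hqd]
    rfl
  rw [h1, h3]; ring

lemma ip_ne {p q : EuclideanSpace ℝ (Fin n)}
    (hp : ∀ i, p i = 0 ∨ p i = 1) (hq : ∀ i, q i = 0 ∨ q i = 1)
    (hpc : {i | p i = 1}.ncard = d) (hqc : {i | q i = 1}.ncard = d)
    (hne : p ≠ q) : ip p q ≠ (d : ℝ) := by
  intro h
  have hpd : ∑ i, p i = (d : ℝ) := sum_coords hp hpc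
  have hle : ∀ i ∈ Finset.univ, p i * q i ≤ p i := fun i _ => by
    rcases hp i with h' | h' <;> rcases hq i with h'' | h'' <;> rw [h', h''] <;> norm_num
  have heq : ∀ i, p i * q i = p i := by
    have hsum : ∑ i, p i * q i = ∑ i, p i := by rw [hpd]; exact h
    intro i
    exact (Finset.sum_eq_sum_iff_of_le hle).1 hsum i (Finset.mem_univ i)
  have hsub : {i | p i = 1} ⊆ {i | q i = 1} := by
    intro i hi
    have hpi : p i = 1 := hi
    have := heq i
    rw [hpi, one_mul] at this
    exact this
  have hset : {i | p i = 1} = {i | q i = 1} :=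
    Set.eq_of_subset_of_ncard_le hsub (by rw [hpc, hqc]) (Set.toFinite _)
  apply hne
  ext i
  rcases hp i with h' | h'
  · rcases hq i with h'' | h''
    · rw [h', h'']
    · have hmemq : i ∈ {j | q j = 1} := h''
      rw [← hset] at hmemq
      have hcon : p i = 1 := hmemq
      rw [h'] at hcon; norm_num at hcon
  · rw [h', (hsub h' : q i = 1)]

end RCW

/-- Ray-Chaudhuri–Wilson bound: an `s`-distance set among the `0,1`-vectors of
Hamming weight exactly `d` has at most `C(n, s)` elements, provided
`s ≤ min(d, n−d)`. -/
theorem ray_chaudhuri_wilson {n d s : ℕ} (hdn : d ≤ n)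
    (hsd : s ≤ d) (hsnd : s ≤ n - d)
    (A : Finset (EuclideanSpace ℝ (Fin n)))
    (hY : ∀ a ∈ A, (∀ i, a i = 0 ∨ a i = 1) ∧ ({i | a i = 1}.ncard = d))
    (hA : (distSet (A : Set (EuclideanSpace ℝ (Fin n)))).ncard ≤ s) :
    A.card ≤ n.choose s := by
  classical
  have h01 : ∀ x ∈ A, ∀ i, x i = 0 ∨ x i = 1 := fun x hx => (hY x hx).1
  have hcard : ∀ x ∈ A, ({i | x i = 1}).ncard = d := fun x hx => (hY x hx).2
  have hsum : ∀ x ∈ A, ∑ i, x i = (d : ℝ) := fun x hx =>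
    RCW.sum_coords (h01 x hx) (hcard x hx)
  -- the distance set is finite
  have hDfin : (distSet (A : Set (EuclideanSpace ℝ (Fin n)))).Finite := by
    apply Set.Finite.subset
      ((A.finite_toSet.prod A.finite_toSet).image
        (fun pq : EuclideanSpace ℝ (Fin n) × EuclideanSpace ℝ (Fin n) => dist pq.1 pq.2))
    rintro r ⟨p, hp, q, hq, hne, rfl⟩
    exact ⟨(p, q), ⟨hp, hq⟩, rfl⟩
  set T := (fun r : ℝ => (d : ℝ) - r ^ 2 / 2) '' distSet (A : Set (EuclideanSpace ℝ (Fin n)))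
    with hT
  have hTfin : T.Finite := hDfin.image _
  set L := hTfin.toFinset with hL
  have hLcard : L.card ≤ s := by
    rw [hL, ← Set.ncard_eq_toFinset_card T hTfin]
    exact le_trans (Set.ncard_image_le hDfin) hA
  -- membership of inner products
  have hmem : ∀ p ∈ A, ∀ q ∈ A, p ≠ q → RCW.ip p q ∈ L := by
    intro p hp q hq hne
    rw [hL, Set.Finite.mem_toFinset]
    refine ⟨dist p q, ⟨p, hp, q, hq, hne, rfl⟩, ?_⟩
    exact (RCW.ip_dist (h01 p hp) (h01 q hq) (hsum p hp) (hsum q hq)).symm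
  have hnd : ∀ μ ∈ L, μ ≠ (d : ℝ) := by
    intro μ hμ
    rw [hL, Set.Finite.mem_toFinset] at hμ
    obtain ⟨r, ⟨p, hp, q, hq, hne, rfl⟩, rfl⟩ := hμ
    show (d : ℝ) - dist p q ^ 2 / 2 ≠ (d : ℝ)
    rw [← RCW.ip_dist (h01 p hp) (h01 q hq) (hsum p hp) (hsum q hq)]
    exact RCW.ip_ne (h01 p hp) (h01 q hq) (hcard p hp) (hcard q hq) hne
  -- the family of polynomials
  set φ : ↥A → (↥A → ℝ) := fun (a x : ↥A) =>
    ∏ μ ∈ L, (RCW.ip (a : EuclideanSpace ℝ (Fin n)) (x : EuclideanSpace ℝ (Fin n)) - μ) with hφ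
  have hφdiag : ∀ a : ↥A, φ a a ≠ 0 := by
    intro a
    rw [hφ]
    apply Finset.prod_ne_zero_iff.2
    intro μ hμ
    rw [RCW.ip_self (h01 a a.2) (hsum a a.2)]
    exact sub_ne_zero_of_ne (Ne.symm (hnd μ hμ))
  have hφoff : ∀ a b : ↥A, a ≠ b → φ a b = 0 := by
    intro a b hab
    have hcne : (a : EuclideanSpace ℝ (Fin n)) ≠ (b : EuclideanSpace ℝ (Fin n)) :=
      fun h => hab (Subtype.ext h)
    exact Finset.prod_eq_zero (hmem ↑a a.2 ↑b b.2 hcne) (sub_self _)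
  -- linear independence
  have hli : LinearIndependent ℝ φ := by
    rw [Fintype.linearIndependent_iff]
    intro g hg b
    have hb := congrFun hg b
    rw [Finset.sum_apply] at hb
    rw [Finset.sum_eq_single b (fun a _ hab => by
      rw [Pi.smul_apply, hφoff a b hab, smul_zero]) (fun h => absurd (Finset.mem_univ b) h)]
      at hb
    rw [Pi.smul_apply, smul_eq_mul] at hb
    have : g b * φ b b = 0 := hb
    exact (mul_eq_zero.1 this).resolve_right (hφdiag b)
  -- each φ a lies in V
  have hφV : ∀ a : ↥A, φ a ∈ RCW.V A s := by
    intro a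
    have h1 : φ a ∈ RCW.U A L.card := RCW.prod_mem_U A h01 ↑a L
    have h2 : RCW.U A s ≤ RCW.V A s := by
      rw [RCW.U]
      apply Submodule.span_le.2
      rintro _ ⟨I, hI, rfl⟩
      exact RCW.M_mem_V A h01 hsum hsd s I hI (Nat.sub_le _ _)
    exact h2 (RCW.U_mono A hLcard h1)
  -- counting
  set S := (Finset.powersetCard s (Finset.univ : Finset (Fin n))).image (RCW.M A) with hS
  have hScard : S.card ≤ n.choose s := by
    apply le_trans (Finset.card_image_le)
    rw [Finset.card_powersetCard, Finset.card_univ, Fintype.card_fin]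
  have : Fintype.card ↥A ≤ Module.finrank ℝ (RCW.V A s) := by
    set ψ : ↥A → RCW.V A s := fun a => ⟨φ a, hφV a⟩ with hψ
    have hliψ : LinearIndependent ℝ ψ := by
      apply LinearIndependent.of_comp (RCW.V A s).subtype
      exact hli
    exact hliψ.fintype_card_le_finrank
  have hrank : Module.finrank ℝ (RCW.V A s) ≤ S.card := by
    have := finrank_span_finset_le_card (R := ℝ) S
    exact this
  rw [← Fintype.card_coe]
  exact le_trans this (le_trans hrank hScard)
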